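/- Write a permutation π of [n] as m_1 L_1 m_2 L_2 ... m_r L_r where m_1,...,m_r are the left-to-right maxima and L_i the (possibly empty) blocks between them. Then π is 3-5̲-2-4-1-satisfying if and only if (i) each block L_i (as a sequence, under order-isomorphic reduction) is 3-5̲-2-4-1-satisfying, and (ii) the permutation obtained from π by sorting the entries within each block L_i into increasing order avoids the pattern 3-2-1. -/

import Mathlib

def IsLRmax {n : ℕ} (π : Equiv.Perm (Fin n)) (p : Fin n) : Prop :=
  ∀ q, q < p → π q < π p

/-- π contains 3-2-4-1 only as part of 3-5-2-4-1. -/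
def Satisfies35241 {n : ℕ} (π : Equiv.Perm (Fin n)) : Prop :=
  ∀ i j k l : Fin n, i < j → j < k → k < l →
    π l < π j → π j < π i → π i < π k →
    ∃ m : Fin n, i < m ∧ m < j ∧ π k < π m

def Avoids321 {n : ℕ} (π : Equiv.Perm (Fin n)) : Prop :=
  ¬ ∃ i j k : Fin n, i < j ∧ j < k ∧ π k < π j ∧ π j < π i

/-- p and q are non-LRmax positions lying in the same block between
consecutive left-to-right maxima: no LRmax position in [min p q, max p q]. -/
def SameBlock {n : ℕ} (π : Equiv.Perm (Fin n)) (p q : Fin n) : Prop :=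
  ∀ t : Fin n, min p q ≤ t → t ≤ max p q → ¬ IsLRmax π t

/-- σ is obtained from π by sorting the entries within each block
(between consecutive left-to-right maxima) into increasing order. -/
def SortsBlocksInc {n : ℕ} (π σ : Equiv.Perm (Fin n)) : Prop :=
  ∃ b : Equiv.Perm (Fin n),
    (∀ p, σ p = π (b p)) ∧
    (∀ p, b p = p ∨ SameBlock π p (b p)) ∧
    (∀ p q, p < q → SameBlock π p q → σ p < σ q)

namespace Aux35241

open Finset

variable {n : ℕ} (π : Equiv.Perm (Fin n))

instance : DecidablePred (IsLRmax π) := fun p =>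
  decidable_of_iff (∀ q, q < p → π q < π p) Iff.rfl

/-- number of LR maxima at positions ≤ p -/
def cnt (p : Fin n) : ℕ := ((Finset.Iic p).filter (IsLRmax π)).card

/-- group index: each LR max is its own group, each block is a group -/
def grp (p : Fin n) : ℕ := 2 * cnt π p + (if IsLRmax π p then 0 else 1)

def key (p : Fin n) : ℕ := (n + 1) * grp π p + (π p : ℕ)

variable {π}

lemma sameBlock_not_lrmax {p q : Fin n} (h : SameBlock π p q) :
    ¬ IsLRmax π p ∧ ¬ IsLRmax π q :=
  ⟨h p (min_le_left _ _) (le_max_left _ _), h q (min_le_right _ _) (le_max_right _ _)⟩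

lemma cnt_mono {p q : Fin n} (h : p ≤ q) : cnt π p ≤ cnt π q :=
  Finset.card_le_card (Finset.filter_subset_filter _ (Finset.Iic_subset_Iic.2 h))

lemma cnt_lt {p q : Fin n} (h : p < q) (hq : IsLRmax π q) : cnt π p < cnt π q := by
  apply Finset.card_lt_card
  refine ⟨Finset.filter_subset_filter _ (Finset.Iic_subset_Iic.2 h.le), ?_⟩
  intro hsub
  have : q ∈ (Finset.Iic q).filter (IsLRmax π) := by
    simp [Finset.mem_filter, hq]
  have := hsub this
  simp only [Finset.mem_filter, Finset.mem_Iic] at this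
  exact absurd this.1 (not_le.2 h)

lemma grp_mono : Monotone (grp π) := by
  intro p q h
  rcases eq_or_lt_of_le h with rfl | h
  · exact le_rfl
  have h1 := cnt_mono (π := π) h.le
  unfold grp
  by_cases hq : IsLRmax π q
  · have := cnt_lt h hq
    split_ifs <;> omega
  · split_ifs <;> omega

lemma grp_lt_of_gap {a b : Fin n} (hab : a < b) {t : Fin n}
    (hat : a ≤ t) (htb : t ≤ b) (ht : IsLRmax π t) : grp π a < grp π b := by
  rcases eq_or_lt_of_le hat with rfl | hat'
  · -- t = a, a is an LR max
    unfold grp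
    by_cases hb : IsLRmax π b
    · have := cnt_lt hab hb
      simp only [ht, hb, if_true]
      omega
    · have := cnt_mono (π := π) hab.le
      simp only [ht, hb, if_true, if_false]
      omega
  · have h1 : cnt π a < cnt π t := cnt_lt hat' ht
    have h2 : cnt π t ≤ cnt π b := cnt_mono (π := π) htb
    unfold grp
    split_ifs <;> omega

lemma lt_of_grp_lt {p q : Fin n} (h : grp π p < grp π q) : p < q := by
  by_contra hc
  push_neg at hc
  exact absurd (grp_mono hc) (not_le.2 h)

lemma grp_eq_of_sameBlock {p q : Fin n} (hpq : p ≤ q) (h : SameBlock π p q) :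
    grp π p = grp π q := by
  obtain ⟨hp, hq⟩ := sameBlock_not_lrmax h
  have hmin : min p q = p := min_eq_left hpq
  have hmax : max p q = q := max_eq_right hpq
  have hcnt : cnt π p = cnt π q := by
    apply le_antisymm (cnt_mono hpq)
    unfold cnt
    apply Finset.card_le_card
    intro t htm
    simp only [Finset.mem_filter, Finset.mem_Iic] at htm ⊢
    refine ⟨?_, htm.2⟩
    by_contra hc
    push_neg at hc
    exact h t (by rw [hmin]; exact hc.le) (by rw [hmax]; exact htm.1) htm.2
  unfold grp
  simp [hp, hq, hcnt]

lemma sameBlock_symm {p q : Fin n} (h : SameBlock π p q) : SameBlock π q p :=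
  fun t h1 h2 => h t (by rwa [min_comm]) (by rwa [max_comm])

lemma sameBlock_of_grp_eq {p q : Fin n} (hne : p ≠ q) (h : grp π p = grp π q) :
    SameBlock π p q := by
  wlog hpq : p < q generalizing p q with H
  · exact sameBlock_symm (H hne.symm h.symm (hne.lt_or_gt.resolve_left hpq))
  have h1 : ¬ IsLRmax π q := by
    intro hq
    have := cnt_lt hpq hq
    unfold grp at h
    split_ifs at h <;> omega
  have hcnt : cnt π p = cnt π q := by
    have := cnt_mono (π := π) hpq.le
    unfold grp at h
    split_ifs at h <;> omega
  have h0 : ¬ IsLRmax π p := by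
    intro hp
    unfold grp at h
    split_ifs at h
    omega
  intro t htm htM ht
  rw [min_eq_left hpq.le] at htm
  rw [max_eq_right hpq.le] at htM
  rcases eq_or_lt_of_le htm with rfl | htm'
  · exact h0 ht
  have := cnt_lt htm' ht
  have := cnt_mono (π := π) htM
  omega

lemma pi_lt_np1 (p : Fin n) : (π p : ℕ) < n + 1 := Nat.lt_succ_of_lt (π p).isLt

lemma key_lt_of_grp_lt {p q : Fin n} (h : grp π p < grp π q) : key π p < key π q := by
  unfold key
  have h1 := pi_lt_np1 (π := π) p
  have e1 : (n+1) * grp π p + (π p : ℕ) < (n+1) * (grp π p + 1) := by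
    rw [Nat.mul_add, Nat.mul_one]
    exact Nat.add_lt_add_left h1 _
  have e2 : (n+1) * (grp π p + 1) ≤ (n+1) * grp π q := Nat.mul_le_mul_left _ h
  exact lt_of_lt_of_le e1 (e2.trans (Nat.le_add_right _ _))

lemma grp_le_of_key_le {p q : Fin n} (h : key π p ≤ key π q) : grp π p ≤ grp π q := by
  by_contra hc
  push_neg at hc
  exact absurd (key_lt_of_grp_lt hc) (not_lt.2 h)

lemma key_inj : Function.Injective (key π) := by
  intro p q h
  have h1 : grp π p = grp π q :=
    le_antisymm (grp_le_of_key_le h.le) (grp_le_of_key_le h.ge)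
  have h2 : (π p : ℕ) = (π q : ℕ) := by
    unfold key at h; rw [h1] at h; omega
  exact π.injective (Fin.val_injective h2)

lemma pi_lt_of_key_lt {p q : Fin n} (hg : grp π p = grp π q) (h : key π p < key π q) :
    π p < π q := by
  unfold key at h
  rw [hg] at h
  exact Fin.lt_def.2 (by omega)

section Sorted

variable (π) in
/-- The canonical block-sorting permutation. -/
noncomputable def bperm : Equiv.Perm (Fin n) := Tuple.sort (key π)

variable (π) in
noncomputable def sigma0 : Equiv.Perm (Fin n) := (bperm π).trans π

lemma key_bperm_strictMono : StrictMono (key π ∘ bperm π) :=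
  (Tuple.monotone_sort (key π)).strictMono_of_injective
    (key_inj.comp (bperm π).injective)

lemma grp_bperm_mono : Monotone (grp π ∘ bperm π) := by
  intro p q h
  exact grp_le_of_key_le ((key_bperm_strictMono (π := π)).monotone h)

/-- counting lemma: a monotone ℕ-valued function on Fin n composed with a permutation,
if still monotone, is unchanged. -/
lemma mono_comp_perm_eq {g : Fin n → ℕ} (hg : Monotone g) (e : Equiv.Perm (Fin n))
    (hge : Monotone (g ∘ e)) : ∀ p, g (e p) = g p := by
  have hcard : ∀ v : ℕ, (Finset.univ.filter fun q => g (e q) ≤ v).card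
      = (Finset.univ.filter fun q => g q ≤ v).card := by
    intro v
    apply Finset.card_bij (fun a _ => e a)
    · intro a ha
      simp only [Finset.mem_filter, Finset.mem_univ, true_and] at ha ⊢
      exact ha
    · intro a _ b _ hab
      exact e.injective hab
    · intro b hb
      refine ⟨e.symm b, ?_, by simp⟩
      simp only [Finset.mem_filter, Finset.mem_univ, true_and] at hb ⊢
      simpa using hb
  have key1 : ∀ (h : Fin n → ℕ), Monotone h → ∀ (v : ℕ) (p : Fin n),
      (p : ℕ) < (Finset.univ.filter fun q => h q ≤ v).card → h p ≤ v := by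
    intro h hh v p hlt
    by_contra hc
    push_neg at hc
    have hsub : (Finset.univ.filter fun q => h q ≤ v) ⊆ Finset.Iio p := by
      intro q hq
      simp only [Finset.mem_filter, Finset.mem_univ, true_and] at hq
      rw [Finset.mem_Iio]
      by_contra hq2
      push_neg at hq2
      exact absurd (le_trans (hh hq2) hq) (not_le.2 hc)
    have := Finset.card_le_card hsub
    rw [Fin.card_Iio] at this
    omega
  have key2 : ∀ (h : Fin n → ℕ), Monotone h → ∀ (v : ℕ) (p : Fin n),
      h p ≤ v → (p : ℕ) < (Finset.univ.filter fun q => h q ≤ v).card := by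
    intro h hh v p hle
    have hsub : Finset.Iic p ⊆ (Finset.univ.filter fun q => h q ≤ v) := by
      intro q hq
      rw [Finset.mem_Iic] at hq
      simp only [Finset.mem_filter, Finset.mem_univ, true_and]
      exact le_trans (hh hq) hle
    have := Finset.card_le_card hsub
    rw [Fin.card_Iic] at this
    omega
  intro p
  apply le_antisymm
  · have h2 : (p : ℕ) < (Finset.univ.filter fun q => g q ≤ g p).card :=
      key2 g hg _ p le_rfl
    rw [← hcard] at h2
    exact key1 _ hge (g p) p h2
  · have h2 : (p : ℕ) < (Finset.univ.filter fun q => g (e q) ≤ g (e p)).card :=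
      key2 _ hge _ p le_rfl
    rw [hcard] at h2
    exact key1 g hg (g (e p)) p h2

lemma grp_bperm (p : Fin n) : grp π (bperm π p) = grp π p :=
  mono_comp_perm_eq grp_mono (bperm π) grp_bperm_mono p

lemma sigma0_sorts : SortsBlocksInc π (sigma0 π) := by
  refine ⟨bperm π, fun p => rfl, ?_, ?_⟩
  · intro p
    by_cases h : bperm π p = p
    · exact Or.inl h
    · exact Or.inr (sameBlock_symm (sameBlock_of_grp_eq h (grp_bperm p)))
  · intro p q hpq hblock
    have hg : grp π p = grp π q := grp_eq_of_sameBlock hpq.le hblock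
    have hk : key π (bperm π p) < key π (bperm π q) := key_bperm_strictMono hpq
    have hg2 : grp π (bperm π p) = grp π (bperm π q) := by
      rw [grp_bperm, grp_bperm, hg]
    show π (bperm π p) < π (bperm π q)
    exact pi_lt_of_key_lt hg2 hk

/-- Lemma T: a decreasing triple with LR maxima in both gaps contradicts the
321-avoidance of the block-sorted permutation. -/
lemma lemT (hyp2 : ∀ σ : Equiv.Perm (Fin n), SortsBlocksInc π σ → Avoids321 σ)
    {a b c : Fin n} (hab : a < b) (hbc : b < c)
    (hba : π b < π a) (hcb : π c < π b)
    (t1 : Fin n) (hat1 : a ≤ t1) (ht1b : t1 ≤ b) (ht1 : IsLRmax π t1)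
    (t2 : Fin n) (hbt2 : b ≤ t2) (ht2c : t2 ≤ c) (ht2 : IsLRmax π t2) : False := by
  have havoid := hyp2 (sigma0 π) sigma0_sorts
  apply havoid
  set e := bperm π with he
  refine ⟨e.symm a, e.symm b, e.symm c, ?_, ?_, ?_, ?_⟩
  · apply lt_of_grp_lt (π := π)
    rw [show grp π (e.symm a) = grp π a from by rw [← grp_bperm (e.symm a)]; simp [he],
        show grp π (e.symm b) = grp π b from by rw [← grp_bperm (e.symm b)]; simp [he]]
    exact grp_lt_of_gap hab hat1 ht1b ht1
  · apply lt_of_grp_lt (π := π)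
    rw [show grp π (e.symm b) = grp π b from by rw [← grp_bperm (e.symm b)]; simp [he],
        show grp π (e.symm c) = grp π c from by rw [← grp_bperm (e.symm c)]; simp [he]]
    exact grp_lt_of_gap hbc hbt2 ht2c ht2
  · show π (e (e.symm c)) < π (e (e.symm b))
    simpa using hcb
  · show π (e (e.symm b)) < π (e (e.symm a))
    simpa using hba

end Sorted

/-- For every position k there is an LR max position M ≤ k whose value dominates
all values at positions ≤ k. -/
lemma exists_argmax (k : Fin n) :
    ∃ M : Fin n, M ≤ k ∧ IsLRmax π M ∧ ∀ q, q ≤ k → π q ≤ π M := by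
  obtain ⟨M, hM, hmax⟩ := Finset.exists_max_image (Finset.Iic k) (fun q => π q)
    ⟨k, Finset.mem_Iic.2 le_rfl⟩
  rw [Finset.mem_Iic] at hM
  refine ⟨M, hM, ?_, fun q hq => hmax q (Finset.mem_Iic.2 hq)⟩
  intro q hq
  have := hmax q (Finset.mem_Iic.2 (hq.le.trans hM))
  rcases lt_or_eq_of_le this with h | h
  · exact h
  · exact absurd (π.injective h) (ne_of_lt hq)

lemma not_sameBlock_elim {p q : Fin n} (hpq : p ≤ q) (h : ¬ SameBlock π p q) :
    ∃ t, p ≤ t ∧ t ≤ q ∧ IsLRmax π t := by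
  unfold SameBlock at h
  push_neg at h
  obtain ⟨t, h1, h2, h3⟩ := h
  rw [min_eq_left hpq] at h1
  rw [max_eq_right hpq] at h2
  exact ⟨t, h1, h2, h3⟩

lemma forward (hsat : Satisfies35241 π) {σ : Equiv.Perm (Fin n)}
    (hσ : SortsBlocksInc π σ) : Avoids321 σ := by
  obtain ⟨b, hb1, hb2, hb3⟩ := hσ
  rintro ⟨i, j, k, hij, hjk, h321a, h321b⟩
  -- helper: for p < u with u an LR max, b p < u
  have hblt : ∀ p u : Fin n, p < u → IsLRmax π u → b p < u := by
    intro p u hpu hu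
    rcases hb2 p with h | h
    · rw [h]; exact hpu
    · by_contra hc
      push_neg at hc
      exact h u ((min_le_left _ _).trans hpu.le) (hc.trans (le_max_right _ _)) hu
  -- j and k are not LR maxima
  have hjn : ¬ IsLRmax π j := by
    intro hj
    have hbj : b j = j := by
      rcases hb2 j with h | h
      · exact h
      · exact absurd (sameBlock_not_lrmax h).1 (not_not.2 hj)
    have hlt : σ i < σ j := by
      rw [hb1 i, hb1 j, hbj]
      exact hj _ (hblt i j hij hj)
    exact lt_asymm hlt h321b
  have hkn : ¬ IsLRmax π k := by
    intro hk
    have hbk : b k = k := by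
      rcases hb2 k with h | h
      · exact h
      · exact absurd (sameBlock_not_lrmax h).1 (not_not.2 hk)
    have hlt : σ j < σ k := by
      rw [hb1 j, hb1 k, hbk]
      exact hk _ (hblt j k hjk hk)
    exact lt_asymm hlt h321a
  have hnsij : ¬ SameBlock π i j := fun h => lt_asymm (hb3 i j hij h) h321b
  have hnsjk : ¬ SameBlock π j k := fun h => lt_asymm (hb3 j k hjk h) h321a
  obtain ⟨t1, ht1i, ht1j, ht1⟩ := not_sameBlock_elim hij.le hnsij
  obtain ⟨t2, ht2j, ht2k, ht2⟩ := not_sameBlock_elim hjk.le hnsjk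
  have ht1j' : t1 < j := lt_of_le_of_ne ht1j (fun h => hjn (h ▸ ht1))
  have ht2j' : j < t2 := lt_of_le_of_ne ht2j (fun h => hjn (h.symm ▸ ht2))
  have ht2k' : t2 < k := lt_of_le_of_ne ht2k (fun h => hkn (h ▸ ht2))
  have hi0 : b i ≤ t1 := by
    rcases hb2 i with h | h
    · rw [h]; exact ht1i
    · have hin : ¬ IsLRmax π i := (sameBlock_not_lrmax h).1
      have hit1 : i < t1 := lt_of_le_of_ne ht1i (fun he => hin (he.symm ▸ ht1))
      by_contra hc; push_neg at hc
      exact h t1 ((min_le_left _ _).trans hit1.le) (hc.le.trans (le_max_right _ _)) ht1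
  have hj0r : t1 < b j := by
    rcases hb2 j with h | h
    · rw [h]; exact ht1j'
    · by_contra hc; push_neg at hc
      exact h t1 ((min_le_right _ _).trans hc) (ht1j'.le.trans (le_max_left _ _)) ht1
  have hj0l : b j < t2 := by
    rcases hb2 j with h | h
    · rw [h]; exact ht2j'
    · by_contra hc; push_neg at hc
      exact h t2 ((min_le_left _ _).trans ht2j'.le) (hc.trans (le_max_right _ _)) ht2
  have hk0 : t2 < b k := by
    rcases hb2 k with h | h
    · rw [h]; exact ht2k'
    · by_contra hc; push_neg at hc
      exact h t2 ((min_le_right _ _).trans hc) (ht2k'.le.trans (le_max_left _ _)) ht2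
  have hv1 : π (b k) < π (b j) := by rw [← hb1 j, ← hb1 k]; exact h321a
  have hv2 : π (b j) < π (b i) := by rw [← hb1 i, ← hb1 j]; exact h321b
  have hv3 : π (b i) < π t2 := ht2 _ (lt_of_le_of_lt hi0 (ht1j'.trans ht2j'))
  obtain ⟨m, hm1, hm2, hm3⟩ := hsat (b i) (b j) t2 (b k)
      (lt_of_le_of_lt hi0 hj0r) hj0l hk0 hv1 hv2 hv3
  exact lt_asymm hm3 (ht2 m (hm2.trans hj0l))

lemma backward
    (hyp1 : ∀ i j k l : Fin n, i < j → j < k → k < l → SameBlock π i l →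
      π l < π j → π j < π i → π i < π k →
      ∃ m : Fin n, i < m ∧ m < j ∧ π k < π m)
    (hyp2 : ∀ σ : Equiv.Perm (Fin n), SortsBlocksInc π σ → Avoids321 σ) :
    Satisfies35241 π := by
  intro i j k l hij hjk hkl h1 h2 h3
  by_cases hsb : SameBlock π i l
  · exact hyp1 i j k l hij hjk hkl hsb h1 h2 h3
  obtain ⟨t, hti, htl, ht⟩ :=
    not_sameBlock_elim (le_of_lt (hij.trans (hjk.trans hkl))) hsb
  by_contra hno
  push_neg at hno
  by_cases h2b : ∃ t2, j ≤ t2 ∧ t2 ≤ l ∧ IsLRmax π t2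
  · obtain ⟨t2, h2a, h2bb, h2c⟩ := h2b
    by_cases h1b : ∃ t1, i ≤ t1 ∧ t1 ≤ j ∧ IsLRmax π t1
    · obtain ⟨t1, ha, hb', hc⟩ := h1b
      exact lemT hyp2 hij (hjk.trans hkl) h2 h1 t1 ha hb' hc t2 h2a h2bb h2c
    · obtain ⟨M, hMj, hM, hMmax⟩ := exists_argmax j
      have hMi : M < i := by
        rcases lt_or_ge M i with h | h
        · exact h
        · exact absurd ⟨M, h, hMj, hM⟩ h1b
      have hpiM : π i < π M := by
        rcases lt_or_eq_of_le (hMmax i hij.le) with h | h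
        · exact h
        · exact absurd (π.injective h) (ne_of_gt hMi)
      exact lemT hyp2 hMi (hij.trans (hjk.trans hkl)) hpiM (h1.trans h2)
        M le_rfl hMi.le hM t2 (hij.le.trans h2a) h2bb h2c
  · push_neg at h2b
    have htj : t < j := by
      rcases lt_or_ge t j with h | h
      · exact h
      · exact absurd ht (h2b t h htl)
    have hkn : ¬ IsLRmax π k := h2b k hjk.le hkl.le
    obtain ⟨M, hMk, hM, hMmax⟩ := exists_argmax k
    have hMk' : M < k := lt_of_le_of_ne hMk (fun h => hkn (h ▸ hM))
    have hpik : π k < π M := by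
      rcases lt_or_eq_of_le (hMmax k le_rfl) with h | h
      · exact h
      · exact absurd (π.injective h) (ne_of_gt hMk')
    have hMj : M < j := by
      rcases lt_or_ge M j with h | h
      · exact h
      · exact absurd hM (h2b M h (hMk.trans hkl.le))
    rcases lt_trichotomy i M with h | h | h
    · exact absurd hpik (not_lt.2 (hno M h hMj))
    · rw [← h] at hpik
      exact lt_asymm h3 hpik
    · exact lemT hyp2 h hij (h3.trans hpik) h2 M le_rfl h.le hM t hti htj.le ht

end Aux35241

theorem stmt8 (n : ℕ) (π : Equiv.Perm (Fin n)) :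
    Satisfies35241 π ↔
      ((∀ i j k l : Fin n, i < j → j < k → k < l → SameBlock π i l →
          π l < π j → π j < π i → π i < π k →
          ∃ m : Fin n, i < m ∧ m < j ∧ π k < π m) ∧
        ∀ σ : Equiv.Perm (Fin n), SortsBlocksInc π σ → Avoids321 σ) := by
  constructor
  · intro hsat
    exact ⟨fun i j k l hij hjk hkl _ => hsat i j k l hij hjk hkl,
      fun σ hσ => Aux35241.forward hsat hσ⟩
  · rintro ⟨hyp1, hyp2⟩
    exact Aux35241.backward hyp1 hyp2
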